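/- Let u_1,…,u_m ∈ S = K[x_1,…,x_n] be nonconstant monomials with pairwise disjoint supports and let I = (u_1,…,u_m) be the monomial complete intersection they generate. Then for every k ≥ 1, Ass(I^k) = { (x_{v_1},…,x_{v_m}) : x_{v_i} ∈ supp(u_i) for each i = 1,…,m }, i.e., the associated primes of I^k are exactly the prime ideals generated by choosing one variable from the support of each generator u_i. In particular, Ass(I^k) = Ass^∞(I) for all k ≥ 1. -/

import Mathlib

open MvPolynomial

noncomputable section

/-- The set of associated primes `Ass(L)` of the quotient by an ideal `L`. -/
def assOf {A : Type} [CommRing A] (L : Ideal A) : Set (Ideal A) :=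
  associatedPrimes A (A ⧸ L)

/-- `𝔄` is the stable value `Ass^∞(L)` of `Ass(L^k)` for all large `k`. -/
def IsStableAssValue {A : Type} [CommRing A] (L : Ideal A) (𝔄 : Set (Ideal A)) : Prop :=
  ∃ N : ℕ, ∀ k : ℕ, N ≤ k → assOf (L ^ k) = 𝔄

/-- `Ass^*(L) = ⋃_{k ≥ 1} Ass(L^k)`. -/
def assStar {A : Type} [CommRing A] (L : Ideal A) : Set (Ideal A) :=
  {p | ∃ k : ℕ, 1 ≤ k ∧ p ∈ assOf (L ^ k)}

/-- The local v-number `v_p(L)`: the least degree of a homogeneous `f` with `(L : f) = p`. -/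
def vnum {σ K : Type} [Field K] (L p : Ideal (MvPolynomial σ K)) : ℕ :=
  sInf {d : ℕ | ∃ f : MvPolynomial σ K, f.IsHomogeneous d ∧ L.colon (Ideal.span {f}) = p}

/-- The v-number `v(L) = min_{p ∈ Ass(L)} v_p(L)`. -/
def vnumber {σ K : Type} [Field K] (L : Ideal (MvPolynomial σ K)) : ℕ :=
  sInf {d : ℕ | ∃ p ∈ assOf L, ∃ f : MvPolynomial σ K,
    f.IsHomogeneous d ∧ L.colon (Ideal.span {f}) = p}

/-- The initial degree `α(L)`: the least `d` such that `L` contains a nonzero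
homogeneous element of degree `d`. -/
def alphaDeg {σ K : Type} [Field K] (L : Ideal (MvPolynomial σ K)) : ℕ :=
  sInf {d : ℕ | ∃ f ∈ L, f ≠ 0 ∧ MvPolynomial.IsHomogeneous f d}

/-- A graded (homogeneous) ideal: one containing all homogeneous components
of each of its elements. -/
def IsGradedIdeal {σ K : Type} [Field K] (I : Ideal (MvPolynomial σ K)) : Prop :=
  ∀ f ∈ I, ∀ d : ℕ, homogeneousComponent d f ∈ I

/-- A monomial ideal: an ideal generated by monomials. -/
def IsMonomialIdeal {σ K : Type} [Field K] (I : Ideal (MvPolynomial σ K)) : Prop :=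
  ∃ G : Set (σ →₀ ℕ), I = Ideal.span ((fun a => (monomial a (1 : K))) '' G)


section Aux
open Pointwise



/-- `Mon a k w` : the monomial `x^w` lies in `I^k` where `I = (x^{a 1},…,x^{a m})`. -/
def MonPow {n m : ℕ} (a : Fin m → (Fin n →₀ ℕ)) (k : ℕ) (w : Fin n →₀ ℕ) : Prop :=
  ∃ c : Fin m → ℕ, (∑ i, c i) = k ∧ (∑ i, c i • a i) ≤ w

lemma sumSmul_apply {n m : ℕ} (a : Fin m → (Fin n →₀ ℕ)) (c : Fin m → ℕ) (j : Fin n) :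
    (∑ i, c i • a i) j = ∑ i, c i * a i j := by
  rw [Finset.sum_apply']
  simp [Finsupp.smul_apply]

lemma single_term_le {n m : ℕ} (a : Fin m → (Fin n →₀ ℕ)) (c : Fin m → ℕ) (j : Fin n)
    (i : Fin m) : c i * a i j ≤ (∑ i, c i • a i) j := by
  rw [sumSmul_apply]
  exact Finset.single_le_sum (f := fun i => c i * a i j) (fun i _ => Nat.zero_le _) (Finset.mem_univ i)

/-- greedy: if `k ≤ ∑ d` then there is `c ≤ d` with `∑ c = k`. -/
lemma exists_sum_eq {m : ℕ} (d : Fin m → ℕ) (k : ℕ) (h : k ≤ ∑ i, d i) :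
    ∃ c : Fin m → ℕ, (∀ i, c i ≤ d i) ∧ (∑ i, c i) = k := by
  induction k with
  | zero => exact ⟨0, fun i => Nat.zero_le _, by simp⟩
  | succ k ih =>
    obtain ⟨c, hc, hsum⟩ := ih (Nat.le_of_succ_le h)
    have : ∃ i, c i < d i := by
      by_contra hcon
      push_neg at hcon
      have : ∑ i, d i ≤ ∑ i, c i := Finset.sum_le_sum fun i _ => hcon i
      omega
    obtain ⟨i, hi⟩ := this
    refine ⟨Function.update c i (c i + 1), fun j => ?_, ?_⟩
    · rcases eq_or_ne j i with rfl | hne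
      · simp [Function.update_self]; omega
      · simp [Function.update_of_ne hne, hc j]
    · rw [Finset.sum_update_of_mem (Finset.mem_univ i), Finset.sdiff_singleton_eq_erase]
      rw [← hsum, ← Finset.sum_erase_add _ _ (Finset.mem_univ i)]
      omega

lemma apos {n m : ℕ} (a : Fin m → (Fin n →₀ ℕ)) {i : Fin m} {j : Fin n}
    (h : j ∈ (a i).support) : 0 < a i j :=
  Nat.pos_of_ne_zero (Finsupp.mem_support_iff.mp h)

/-- coordinate-disjointness: if `j ∈ supp (a i)` and `l ≠ i` then `a l j = 0`. -/
lemma disj_zero {n m : ℕ} {a : Fin m → (Fin n →₀ ℕ)}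
    (hdisj : Pairwise fun i j => Disjoint (a i).support (a j).support)
    {i l : Fin m} {j : Fin n} (hj : j ∈ (a i).support) (hli : l ≠ i) : a l j = 0 := by
  by_contra h
  exact (Finset.disjoint_left.mp (hdisj hli) (Finsupp.mem_support_iff.mpr h)) hj

lemma lemA {n m : ℕ} (hm : 1 ≤ m) (a : Fin m → (Fin n →₀ ℕ))
    (hdisj : Pairwise fun i j => Disjoint (a i).support (a j).support)
    (v : Fin m → Fin n) (hv : ∀ i, v i ∈ (a i).support)
    (k : ℕ) (hk : 1 ≤ k) (c₀ μ : Fin n →₀ ℕ)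
    (h1 : ¬ MonPow a k c₀)
    (h2 : ∀ i, MonPow a k (Finsupp.single (v i) 1 + c₀))
    (h3 : MonPow a k (μ + c₀))
    (h4 : ∀ i, μ (v i) = 0) : False := by
  classical
  set d : Fin m → ℕ := fun i => (a i).support.inf' ⟨v i, hv i⟩ (fun j => c₀ j / a i j) with hd
  -- Claim 1 : ∑ d < k
  have claim1 : (∑ i, d i) < k := by
    by_contra hcon
    push_neg at hcon
    obtain ⟨c, hc, hcsum⟩ := exists_sum_eq d k hcon
    refine h1 ⟨c, hcsum, ?_⟩
    intro j
    rw [sumSmul_apply]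
    by_cases hex : ∃ i, j ∈ (a i).support
    · obtain ⟨i₀, hi₀⟩ := hex
      rw [Finset.sum_eq_single i₀ (fun l _ hl => by rw [disj_zero hdisj hi₀ hl, Nat.mul_zero])
        (fun h => absurd (Finset.mem_univ i₀) h)]
      calc c i₀ * a i₀ j ≤ (c₀ j / a i₀ j) * a i₀ j := by
              exact Nat.mul_le_mul_right _ (le_trans (hc i₀) (Finset.inf'_le _ hi₀))
        _ ≤ c₀ j := Nat.div_mul_le_self _ _
    · push_neg at hex
      have : ∀ i ∈ Finset.univ, c i * a i j = 0 := fun i _ => by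
        rw [Finsupp.notMem_support_iff.mp (hex i), Nat.mul_zero]
      rw [Finset.sum_eq_zero this]
      exact Nat.zero_le _
  -- structure of witnesses for h2
  have step : ∀ i : Fin m, ∃ b : Fin m → ℕ, (∑ l, b l) = k ∧ b i ≤ d i + 1 ∧
      (∀ l, l ≠ i → b l ≤ d l) ∧ (∀ j ∈ (a i).support, j ≠ v i → b i * a i j ≤ c₀ j) := by
    intro i
    obtain ⟨b, hbsum, hble⟩ := h2 i
    have key : ∀ l : Fin m, ∀ j ∈ (a l).support,
        b l * a l j ≤ (Finsupp.single (v i) 1) j + c₀ j := by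
      intro l j hj
      calc b l * a l j ≤ (∑ l, b l • a l) j := single_term_le a b j l
        _ ≤ ((Finsupp.single (v i) 1 + c₀ : Fin n →₀ ℕ)) j := Finsupp.le_def.mp hble j
        _ = (Finsupp.single (v i) 1) j + c₀ j := Finsupp.add_apply _ _ _
    refine ⟨b, hbsum, ?_, ?_, ?_⟩
    · -- b i ≤ d i + 1
      have : b i - 1 ≤ d i := by
        apply Finset.le_inf'
        intro j hj
        have h5 := key i j hj
        have hpos := apos a hj
        rw [Nat.le_div_iff_mul_le hpos]
        have hone : (Finsupp.single (v i) 1) j ≤ 1 := by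
          rw [Finsupp.single_apply]; split <;> omega
        calc (b i - 1) * a i j = b i * a i j - 1 * a i j := by rw [Nat.sub_mul]
          _ ≤ (1 + c₀ j) - 1 * a i j := by
              apply Nat.sub_le_sub_right; omega
          _ ≤ c₀ j := by omega
      omega
    · -- l ≠ i
      intro l hl
      apply Finset.le_inf'
      intro j hj
      have h5 := key l j hj
      have hvj : j ≠ v i := by
        intro hcon
        exact Finsupp.mem_support_iff.mp hj (by rw [hcon] at hj ⊢; exact disj_zero hdisj (hv i) hl)
      rw [Finsupp.single_apply, if_neg (fun h => hvj h.symm)] at h5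
      rw [Nat.le_div_iff_mul_le (apos a hj)]
      omega
    · intro j hj hjv
      have h5 := key i j hj
      rw [Finsupp.single_apply, if_neg (fun h => hjv h.symm)] at h5
      omega
  -- k = ∑ d + 1
  have hkd : k = (∑ i, d i) + 1 := by
    obtain ⟨b, hbsum, hbi, hbl, _⟩ := step ⟨0, hm⟩
    have : (∑ l, b l) ≤ (∑ l, d l) + 1 := by
      have h6 : ∀ l ∈ Finset.univ, b l ≤ d l + (if l = (⟨0, hm⟩ : Fin m) then 1 else 0) := by
        intro l _
        rcases eq_or_ne l ⟨0, hm⟩ with rfl | hne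
        · simpa using hbi
        · simpa [hne] using hbl l hne
      calc (∑ l, b l) ≤ ∑ l, (d l + if l = (⟨0, hm⟩ : Fin m) then 1 else 0) :=
            Finset.sum_le_sum h6
        _ = (∑ l, d l) + 1 := by rw [Finset.sum_add_distrib]; simp
    omega
  -- ∀ i, d i = c₀ (v i) / a i (v i)
  have ht : ∀ i, d i = c₀ (v i) / a i (v i) := by
    intro i
    obtain ⟨b, hbsum, hbi, hbl, hbj⟩ := step i
    have hbie : b i = d i + 1 := by
      have h7 : (∑ l ∈ Finset.univ.erase i, b l) ≤ ∑ l ∈ Finset.univ.erase i, d l :=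
        Finset.sum_le_sum fun l hl => hbl l (Finset.mem_erase.mp hl).1
      have e1 : b i + (∑ l ∈ Finset.univ.erase i, b l) = ∑ l, b l :=
        Finset.add_sum_erase _ _ (Finset.mem_univ i)
      have e2 : d i + (∑ l ∈ Finset.univ.erase i, d l) = ∑ l, d l :=
        Finset.add_sum_erase _ _ (Finset.mem_univ i)
      omega
    refine le_antisymm (Finset.inf'_le _ (hv i)) ?_
    obtain ⟨j, hj, hdj⟩ := Finset.exists_mem_eq_inf' ⟨v i, hv i⟩ (fun j => c₀ j / a i j)
    rcases eq_or_ne j (v i) with rfl | hne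
    · rw [hd]; rw [← hdj]
    · exfalso
      have h8 := hbj j hj hne
      have h9 : b i ≤ c₀ j / a i j := by
        rw [Nat.le_div_iff_mul_le (apos a hj)]; exact h8
      rw [← hdj] at h9
      have h10 : b i ≤ d i := h9
      omega
  -- contradiction via h3
  obtain ⟨b, hbsum, hble⟩ := h3
  have hfin : ∀ i, b i ≤ d i := by
    intro i
    have h5 : b i * a i (v i) ≤ (μ + c₀) (v i) := le_trans (single_term_le a b (v i) i) (hble _)
    rw [Finsupp.add_apply, h4 i] at h5
    rw [ht i, Nat.le_div_iff_mul_le (apos a (hv i))]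
    omega
  have : (∑ i, b i) ≤ ∑ i, d i := Finset.sum_le_sum fun i _ => hfin i
  omega



def genSet {n m : ℕ} (a : Fin m → (Fin n →₀ ℕ)) (k : ℕ) : Set (Fin n →₀ ℕ) :=
  {w | ∃ c : Fin m → ℕ, (∑ i, c i) = k ∧ w = ∑ i, c i • a i}

lemma span_monomial_mul {n : ℕ} {K : Type} [Field K] (S T : Set (Fin n →₀ ℕ)) :
    Ideal.span ((fun w => monomial w (1:K)) '' S) * Ideal.span ((fun w => monomial w (1:K)) '' T)
      = Ideal.span ((fun w => monomial w (1:K)) '' (S + T)) := by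
  have hmono : ∀ s t : Fin n →₀ ℕ,
      (monomial (s + t) (1:K)) = monomial s 1 * monomial t 1 := by
    intro s t; rw [monomial_mul, one_mul]
  apply le_antisymm
  · rw [Ideal.span_mul_span]
    apply Ideal.span_le.mpr
    intro x hx
    rw [Set.mem_mul] at hx
    obtain ⟨s, ⟨w, hw, rfl⟩, t, ⟨w', hw', rfl⟩, rfl⟩ := hx
    exact Ideal.subset_span ⟨w + w', Set.add_mem_add hw hw', by simp only []; exact hmono w w'⟩
  · apply Ideal.span_le.mpr
    rintro x ⟨w, hw, rfl⟩
    rw [Set.mem_add] at hw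
    obtain ⟨s, hs, t, ht, rfl⟩ := hw
    show (monomial (s + t) (1:K)) ∈ _
    rw [hmono]
    exact Ideal.mul_mem_mul (Ideal.subset_span ⟨s, hs, rfl⟩) (Ideal.subset_span ⟨t, ht, rfl⟩)

lemma sum_split {m : ℕ} {M : Type*} [AddCommMonoid M] (c : Fin m → M) (i : Fin m) :
    (∑ l, c l) = c i + ∑ l ∈ Finset.univ.erase i, c l :=
  (Finset.add_sum_erase _ _ (Finset.mem_univ i)).symm

lemma genSet_succ {n m : ℕ} (a : Fin m → (Fin n →₀ ℕ)) (k : ℕ) :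
    genSet a (k + 1) = Set.range a + genSet a k := by
  classical
  ext w
  rw [Set.mem_add]
  constructor
  · rintro ⟨c, hc, rfl⟩
    have hex : ∃ i, c i ≠ 0 := by
      by_contra hcon; push_neg at hcon
      rw [Finset.sum_eq_zero (fun i _ => hcon i)] at hc
      omega
    obtain ⟨i, hi⟩ := hex
    set c' : Fin m → ℕ := Function.update c i (c i - 1) with hc'
    have hD : c' i = c i - 1 := Function.update_self _ _ _
    have hE : ∀ l ∈ Finset.univ.erase i, c' l = c l := fun l hl => by
      rw [hc', Function.update_of_ne (Finset.mem_erase.mp hl).1]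
    refine ⟨a i, ⟨i, rfl⟩, ∑ l, c' l • a l, ⟨c', ?_, rfl⟩, ?_⟩
    · have A := sum_split c i
      have B := sum_split c' i
      have hE' : (∑ l ∈ Finset.univ.erase i, c' l) = ∑ l ∈ Finset.univ.erase i, c l :=
        Finset.sum_congr rfl hE
      omega
    · rw [sum_split (fun l => c l • a l) i, sum_split (fun l => c' l • a l) i]
      have e3 : ∑ l ∈ Finset.univ.erase i, c' l • a l = ∑ l ∈ Finset.univ.erase i, c l • a l :=
        Finset.sum_congr rfl fun l hl => by rw [hE l hl]
      rw [e3, ← add_assoc]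
      congr 1
      rw [hD]
      conv_rhs => rw [show c i = 1 + (c i - 1) by omega, add_nsmul, one_nsmul]
  · rintro ⟨x, ⟨i, rfl⟩, y, ⟨c, hc, rfl⟩, rfl⟩
    set c' : Fin m → ℕ := Function.update c i (c i + 1) with hc'
    have hD : c' i = c i + 1 := Function.update_self _ _ _
    have hE : ∀ l ∈ Finset.univ.erase i, c' l = c l := fun l hl => by
      rw [hc', Function.update_of_ne (Finset.mem_erase.mp hl).1]
    refine ⟨c', ?_, ?_⟩
    · have A := sum_split c i
      have B := sum_split c' i
      have hE' : (∑ l ∈ Finset.univ.erase i, c' l) = ∑ l ∈ Finset.univ.erase i, c l :=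
        Finset.sum_congr rfl hE
      omega
    · rw [sum_split (fun l => c l • a l) i, sum_split (fun l => c' l • a l) i]
      have e3 : ∑ l ∈ Finset.univ.erase i, c' l • a l = ∑ l ∈ Finset.univ.erase i, c l • a l :=
        Finset.sum_congr rfl fun l hl => by rw [hE l hl]
      rw [e3, ← add_assoc]
      congr 1
      rw [hD, add_nsmul, one_nsmul, add_comm]

lemma pow_eq {n m : ℕ} {K : Type} [Field K] (a : Fin m → (Fin n →₀ ℕ)) (k : ℕ) :
    (Ideal.span (Set.range fun i => (monomial (a i) (1:K)))) ^ k
      = Ideal.span ((fun w => monomial w (1:K)) '' genSet a k) := by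
  induction k with
  | zero =>
    have h0 : genSet a 0 = {0} := by
      ext w
      constructor
      · rintro ⟨c, hc, rfl⟩
        have : ∀ i ∈ Finset.univ, c i • a i = 0 := by
          intro i _
          have : c i = 0 := Finset.sum_eq_zero_iff.mp hc i (Finset.mem_univ i)
          simp [this]
        simp [Finset.sum_eq_zero this]
      · rintro rfl
        exact ⟨0, by simp, by simp⟩
    rw [pow_zero, h0, Set.image_singleton, Ideal.one_eq_top]
    rw [show (monomial (0 : Fin n →₀ ℕ) (1:K)) = 1 from by simp [monomial_zero']]
    rw [Ideal.span_singleton_one]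
  | succ k ih =>
    have hr : (Set.range fun i => (monomial (a i) (1:K)))
        = (fun w => monomial w (1:K)) '' Set.range a := by
      ext x
      constructor
      · rintro ⟨i, rfl⟩; exact ⟨a i, ⟨i, rfl⟩, rfl⟩
      · rintro ⟨w, ⟨i, rfl⟩, rfl⟩; exact ⟨i, rfl⟩
    rw [pow_succ, ih, hr, span_monomial_mul, genSet_succ, add_comm (Set.range a)]

lemma mem_pow_iff {n m : ℕ} {K : Type} [Field K] (a : Fin m → (Fin n →₀ ℕ)) (k : ℕ)
    (f : MvPolynomial (Fin n) K) :
    f ∈ (Ideal.span (Set.range fun i => (monomial (a i) (1:K)))) ^ k ↔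
      ∀ w ∈ f.support, MonPow a k w := by
  rw [pow_eq, mem_ideal_span_monomial_image]
  constructor
  · intro h w hw
    obtain ⟨si, ⟨c, hc, rfl⟩, hle⟩ := h w hw
    exact ⟨c, hc, hle⟩
  · intro h w hw
    obtain ⟨c, hc, hle⟩ := h w hw
    exact ⟨∑ i, c i • a i, ⟨c, hc, rfl⟩, hle⟩

lemma span_X_isPrime {n : ℕ} {K : Type} [Field K] (s : Set (Fin n)) :
    (Ideal.span (X '' s : Set (MvPolynomial (Fin n) K))).IsPrime := by
  classical
  set φ : Fin n → MvPolynomial (Fin n) K := fun j => if j ∈ s then 0 else X j with hφ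
  have key : ∀ f : MvPolynomial (Fin n) K,
      f - aeval φ f ∈ Ideal.span (X '' s : Set (MvPolynomial (Fin n) K)) := by
    intro f
    induction f using MvPolynomial.induction_on with
    | C a => rw [aeval_C]; simp
    | add p q hp hq =>
      rw [map_add, show p + q - (aeval φ p + aeval φ q) = (p - aeval φ p) + (q - aeval φ q)
        from by ring]
      exact Ideal.add_mem _ hp hq
    | mul_X p j hp =>
      rw [map_mul, aeval_X, show p * X j - aeval φ p * φ j
          = (p - aeval φ p) * X j + aeval φ p * (X j - φ j) from by ring]
      apply Ideal.add_mem
      · exact Ideal.mul_mem_right _ _ hp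
      · by_cases hjs : j ∈ s
        · rw [hφ]; simp only [if_pos hjs, sub_zero]
          exact Ideal.mul_mem_left _ _ (Ideal.subset_span ⟨j, hjs, rfl⟩)
        · rw [hφ]; simp [if_neg hjs]
  have hker : Ideal.span (X '' s : Set (MvPolynomial (Fin n) K))
      = RingHom.ker (aeval φ : MvPolynomial (Fin n) K →ₐ[K] MvPolynomial (Fin n) K) := by
    apply le_antisymm
    · apply Ideal.span_le.mpr
      rintro x ⟨j, hj, rfl⟩
      show aeval φ (X j) = 0
      rw [aeval_X, hφ]; simp [if_pos hj]
    · intro f hf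
      have h0 : aeval φ f = 0 := hf
      have := key f
      rwa [h0, sub_zero] at this
  rw [hker]
  exact RingHom.ker_isPrime _

lemma mem_ann_iff {A : Type*} [CommRing A] (J : Ideal A) (f g : A) :
    g ∈ (⊥ : Submodule A (A ⧸ J)).colon {Ideal.Quotient.mk J f}
      ↔ g * f ∈ J := by
  rw [Submodule.mem_colon_singleton, Submodule.mem_bot]
  have : g • (Ideal.Quotient.mk J f) = Ideal.Quotient.mk J (g * f) := rfl
  rw [this, Ideal.Quotient.eq_zero_iff_mem]



section c
variable {n m : ℕ} {K : Type} [Field K]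

-- the span of chosen variables as image
lemma spanXv_eq (v : Fin m → Fin n) :
    Ideal.span (Set.range fun i => (X (v i) : MvPolynomial (Fin n) K))
      = Ideal.span (X '' Set.range v : Set (MvPolynomial (Fin n) K)) := by
  congr 1
  ext x
  constructor
  · rintro ⟨i, rfl⟩; exact ⟨v i, ⟨i, rfl⟩, rfl⟩
  · rintro ⟨t, ⟨i, rfl⟩, rfl⟩; exact ⟨i, rfl⟩

lemma vne {a : Fin m → (Fin n →₀ ℕ)}
    (hdisj : Pairwise fun i j => Disjoint (a i).support (a j).support)
    {v : Fin m → Fin n} (hv : ∀ i, v i ∈ (a i).support) {i l : Fin m} (h : l ≠ i) :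
    v l ≠ v i := by
  intro hcon
  have := disj_zero hdisj (hv i) h
  rw [← hcon] at this
  exact (Finsupp.mem_support_iff.mp (hv l)) this

theorem assoc_of_choice (hm : 1 ≤ m) (a : Fin m → (Fin n →₀ ℕ))
    (hdisj : Pairwise fun i j => Disjoint (a i).support (a j).support)
    (k : ℕ) (hk : 1 ≤ k) (v : Fin m → Fin n) (hv : ∀ i, v i ∈ (a i).support) :
    IsAssociatedPrime (Ideal.span (Set.range fun i => (X (v i) : MvPolynomial (Fin n) K)))
      (MvPolynomial (Fin n) K ⧸
        (Ideal.span (Set.range fun i => (monomial (a i) (1:K)))) ^ k) := by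
  classical
  set i₀ : Fin m := ⟨0, hm⟩ with hi₀
  set b : Fin m → ℕ := fun i => if i = i₀ then k else 1 with hb
  have hb1 : ∀ i, 1 ≤ b i := by intro i; rw [hb]; dsimp; split <;> omega
  set w : Fin n →₀ ℕ := ∑ i, (b i • a i - Finsupp.single (v i) 1) with hw
  have w_apply : ∀ t, w t = ∑ i, (b i * a i t - (if v i = t then 1 else 0)) := by
    intro t
    rw [hw, Finset.sum_apply']
    apply Finset.sum_congr rfl
    intro i _
    rw [Finsupp.tsub_apply, Finsupp.smul_apply, smul_eq_mul, Finsupp.single_apply]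
  have w_at_v : ∀ i, w (v i) = b i * a i (v i) - 1 := by
    intro i
    rw [w_apply]
    rw [Finset.sum_eq_single i]
    · rw [if_pos rfl]
    · intro l _ hl
      rw [disj_zero hdisj (hv i) hl, Nat.mul_zero,
        if_neg (vne hdisj hv hl), Nat.zero_sub]
    · intro h; exact absurd (Finset.mem_univ i) h
  have hsumb1 : (∑ i, (b i - 1)) = k - 1 := by
    have : ∀ i ∈ Finset.univ, b i - 1 = if i = i₀ then k - 1 else 0 := by
      intro i _; rw [hb]; dsimp; split <;> omega
    rw [Finset.sum_congr rfl this, Finset.sum_ite_eq' Finset.univ i₀ (fun _ => k - 1),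
      if_pos (Finset.mem_univ i₀)]
  rw [isAssociatedPrime_iff]
  constructor
  · rw [spanXv_eq]; exact span_X_isPrime _
  refine ⟨Ideal.Quotient.mk _ (monomial w (1:K)), ?_⟩
  apply le_antisymm
  · -- span ≤ ann
    apply Ideal.span_le.mpr
    rintro x ⟨j, rfl⟩
    rw [SetLike.mem_coe, mem_ann_iff]
    have hXm : (X (v j) : MvPolynomial (Fin n) K) * monomial w 1
        = monomial (Finsupp.single (v j) 1 + w) 1 := by
      rw [X, monomial_mul, one_mul]
    rw [hXm, mem_pow_iff]
    intro u hu
    rw [support_monomial, if_neg (one_ne_zero)] at hu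
    rw [Finset.mem_singleton] at hu
    subst hu
    -- provide c
    refine ⟨fun i => if i = j then b j else b i - 1, ?_, ?_⟩
    · rw [sum_split (fun i => if i = j then b j else b i - 1) j, if_pos rfl]
      have he : ∀ i ∈ Finset.univ.erase j, (if i = j then b j else b i - 1)
          = if i = i₀ then k - 1 else 0 := by
        intro i hi
        rw [if_neg (Finset.mem_erase.mp hi).1, hb]; dsimp; split <;> omega
      rw [Finset.sum_congr rfl he, Finset.sum_ite_eq' (Finset.univ.erase j) i₀ (fun _ => k - 1)]
      rcases eq_or_ne j i₀ with rfl | hne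
      · rw [if_neg (by simp), hb]; simp
      · rw [if_pos (Finset.mem_erase.mpr ⟨Ne.symm hne, Finset.mem_univ _⟩), hb]
        dsimp; rw [if_neg hne]; omega
    · intro t
      rw [sumSmul_apply, Finsupp.add_apply, w_apply]
      by_cases hex : ∃ i, t ∈ (a i).support
      · obtain ⟨i, hi⟩ := hex
        rw [Finset.sum_eq_single i (fun l _ hl => by
          rw [disj_zero hdisj hi hl, Nat.mul_zero]) (fun h => absurd (Finset.mem_univ i) h)]
        have hterm : (b i * a i t - (if v i = t then 1 else 0))
            ≤ ∑ l, (b l * a l t - (if v l = t then 1 else 0)) :=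
          Finset.single_le_sum (f := fun l => (b l * a l t - (if v l = t then 1 else 0)))
            (fun l _ => Nat.zero_le _) (Finset.mem_univ i)
        have hba : 1 ≤ b i * a i t := Nat.mul_pos (hb1 i) (apos a hi)
        have hsingle : (Finsupp.single (v j) 1) t = if v j = t then 1 else 0 :=
          Finsupp.single_apply
        rcases eq_or_ne i j with rfl | hij
        · rw [if_pos rfl]
          rcases eq_or_ne (v i) t with hvt | hvt
          · rw [hsingle, if_pos hvt]
            have := hterm; rw [if_pos hvt] at this
            omega
          · rw [hsingle, if_neg hvt]
            have := hterm; rw [if_neg hvt] at this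
            omega
        · rw [if_neg hij]
          have hait : 1 ≤ a i t := apos a hi
          rcases eq_or_ne (v i) t with hvt | hvt
          · have := hterm; rw [if_pos hvt] at this
            have hsub : (b i - 1) * a i t = b i * a i t - a i t := by
              rw [Nat.sub_mul, Nat.one_mul]
            omega
          · have := hterm; rw [if_neg hvt] at this
            have hsub : (b i - 1) * a i t = b i * a i t - a i t := by
              rw [Nat.sub_mul, Nat.one_mul]
            omega
      · push_neg at hex
        have : ∀ i ∈ Finset.univ, (if i = j then b j else b i - 1) * a i t = 0 := fun i _ => by
          rw [Finsupp.notMem_support_iff.mp (hex i), Nat.mul_zero]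
        rw [Finset.sum_eq_zero this]
        exact Nat.zero_le _
  · -- ann ≤ span
    intro g hg
    rw [mem_ann_iff] at hg
    rw [mem_pow_iff] at hg
    rw [spanXv_eq, mem_ideal_span_X_image]
    intro μ hμ
    by_contra hcon
    push_neg at hcon
    have h4 : ∀ i, μ (v i) = 0 := fun i => hcon (v i) ⟨i, rfl⟩
    have hμw : μ + w ∈ (g * monomial w (1:K)).support := by
      rw [mem_support_iff, coeff_mul_monomial, mul_one]
      exact mem_support_iff.mp hμ
    obtain ⟨c, hcsum, hcle⟩ := hg (μ + w) hμw
    have hui : ∀ i, c i ≤ b i - 1 := by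
      intro i
      have h5 : c i * a i (v i) ≤ (μ + w) (v i) :=
        le_trans (single_term_le a c (v i) i) (Finsupp.le_def.mp hcle (v i))
      rw [Finsupp.add_apply, h4 i, Nat.zero_add, w_at_v i] at h5
      have hba : 1 ≤ b i * a i (v i) := Nat.mul_pos (hb1 i) (apos a (hv i))
      by_contra hge
      push_neg at hge
      have : b i ≤ c i := by omega
      have := Nat.mul_le_mul_right (a i (v i)) this
      omega
    have : (∑ i, c i) ≤ ∑ i, (b i - 1) := Finset.sum_le_sum fun i _ => hui i
    rw [hsumb1, hcsum] at this
    omega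
end c

section d
variable {n m : ℕ} {K : Type} [Field K]

def strip (Q : (Fin n →₀ ℕ) → Prop) [DecidablePred Q] (f : MvPolynomial (Fin n) K) :
    MvPolynomial (Fin n) K :=
  ∑ u ∈ f.support.filter Q, monomial u (coeff u f)

lemma coeff_strip (Q : (Fin n →₀ ℕ) → Prop) [DecidablePred Q] (f : MvPolynomial (Fin n) K)
    (u : Fin n →₀ ℕ) : coeff u (strip Q f) = if Q u then coeff u f else 0 := by
  rw [strip, coeff_sum]
  simp_rw [coeff_monomial]
  rw [Finset.sum_ite_eq' (f.support.filter Q) u (fun u' => coeff u' f)]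
  by_cases hq : Q u
  · by_cases hs : u ∈ f.support
    · rw [if_pos (Finset.mem_filter.mpr ⟨hs, hq⟩), if_pos hq]
    · rw [if_neg (fun h => hs (Finset.mem_filter.mp h).1), if_pos hq,
        notMem_support_iff.mp hs]
  · rw [if_neg (fun h => hq (Finset.mem_filter.mp h).2), if_neg hq]

theorem assoc_subset (hm : 1 ≤ m) (a : Fin m → (Fin n →₀ ℕ)) (hne : ∀ i, a i ≠ 0)
    (hdisj : Pairwise fun i j => Disjoint (a i).support (a j).support)
    (k : ℕ) (hk : 1 ≤ k) (p : Ideal (MvPolynomial (Fin n) K))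
    (hp : IsAssociatedPrime p (MvPolynomial (Fin n) K ⧸
        (Ideal.span (Set.range fun i => (monomial (a i) (1:K)))) ^ k)) :
    ∃ v : Fin m → Fin n, (∀ i, v i ∈ (a i).support) ∧
      p = Ideal.span (Set.range fun i => (X (v i) : MvPolynomial (Fin n) K)) := by
  classical
  set I : Ideal (MvPolynomial (Fin n) K) :=
    Ideal.span (Set.range fun i => (monomial (a i) (1:K))) with hI
  obtain ⟨hprime, x, hx⟩ := isAssociatedPrime_iff.mp hp
  obtain ⟨f, rfl⟩ := Ideal.Quotient.mk_surjective x
  have memann : ∀ g, g ∈ p ↔ g * f ∈ I ^ k := fun g => by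
    rw [hx]; exact mem_ann_iff _ _ _
  have fnot : f ∉ I ^ k := by
    intro h
    exact hprime.ne_top ((Ideal.eq_top_iff_one p).mpr ((memann 1).mpr (by rwa [one_mul])))
  have hchoice : ∀ i, ∃ j ∈ (a i).support, (X j : MvPolynomial (Fin n) K) ∈ p := by
    intro i
    have h1 : (monomial (a i) (1:K)) ^ k ∈ I ^ k :=
      Ideal.pow_mem_pow (Ideal.subset_span
        (show (monomial (a i) (1:K)) ∈ Set.range fun l => (monomial (a l) (1:K)) from ⟨i, rfl⟩)) k
    have h2 : (monomial (a i) (1:K)) ∈ p := by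
      have hmul : (monomial (a i) (1:K))^k * f ∈ I^k := Ideal.mul_mem_right _ _ h1
      exact hprime.mem_of_pow_mem k ((memann _).mpr hmul)
    have h3 : (monomial (a i) (1:K)) = ∏ j ∈ (a i).support, X j ^ (a i j) := by
      rw [monomial_eq, C_1, one_mul]
      rfl
    rw [h3] at h2
    have h4 := (Ideal.IsPrime.prod_mem_iff (hp := hprime)).mp h2
    obtain ⟨j, hj, hjp⟩ := h4
    refine ⟨j, hj, ?_⟩
    exact hprime.mem_of_pow_mem _ hjp
  choose v hv1 hv2 using hchoice
  have hPle : Ideal.span (Set.range fun i => (X (v i) : MvPolynomial (Fin n) K)) ≤ p := by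
    apply Ideal.span_le.mpr
    rintro x ⟨i, rfl⟩
    exact hv2 i
  refine ⟨v, hv1, ?_⟩
  apply le_antisymm _ hPle
  intro g hg
  set Q : (Fin n →₀ ℕ) → Prop := fun μ => ∀ i, μ (v i) = 0 with hQ
  set g₀ : MvPolynomial (Fin n) K := strip Q g with hg₀
  have hgg₀ : g - g₀ ∈ Ideal.span (Set.range fun i => (X (v i) : MvPolynomial (Fin n) K)) := by
    rw [spanXv_eq, mem_ideal_span_X_image]
    intro μ hμ
    rw [mem_support_iff, coeff_sub, coeff_strip] at hμ
    by_cases hq : Q μ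
    · rw [if_pos hq, sub_self] at hμ
      exact absurd rfl hμ
    · rw [if_neg hq] at hμ
      have hq' : ∃ i, μ (v i) ≠ 0 := by
        by_contra hall
        push_neg at hall
        exact hq (by rw [hQ]; exact fun i => hall i)
      obtain ⟨i, hi⟩ := hq'
      exact ⟨v i, ⟨i, rfl⟩, hi⟩
  have hg₀p : g₀ ∈ p := by
    have : g₀ = g - (g - g₀) := by ring
    rw [this]
    exact Ideal.sub_mem _ hg (hPle hgg₀)
  have hg₀zero : g₀ = 0 := by
    by_contra hg0
    set f₀ : MvPolynomial (Fin n) K := strip (fun u => ¬ MonPow a k u) f with hf₀def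
    have hff₀ : f - f₀ ∈ I ^ k := by
      rw [hI, mem_pow_iff]
      intro u hu
      rw [mem_support_iff, coeff_sub, coeff_strip] at hu
      by_cases hmon : MonPow a k u
      · exact hmon
      · rw [if_pos hmon, sub_self] at hu
        exact absurd rfl hu
    have hf0ne : f₀ ≠ 0 := by
      intro h0
      rw [h0, sub_zero] at hff₀
      exact fnot hff₀
    have hprod : g₀ * f₀ ∈ I ^ k := by
      have h1 : g₀ * f ∈ I ^ k := (memann g₀).mp hg₀p
      have h2 : g₀ * (f - f₀) ∈ I ^ k := Ideal.mul_mem_left _ _ hff₀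
      have : g₀ * f₀ = g₀ * f - g₀ * (f - f₀) := by ring
      rw [this]
      exact Ideal.sub_mem _ h1 h2
    have hXf₀ : ∀ i, (X (v i) : MvPolynomial (Fin n) K) * f₀ ∈ I ^ k := by
      intro i
      have h1 : (X (v i) : MvPolynomial (Fin n) K) * f ∈ I ^ k := (memann _).mp (hv2 i)
      have h2 : (X (v i) : MvPolynomial (Fin n) K) * (f - f₀) ∈ I ^ k :=
        Ideal.mul_mem_left _ _ hff₀
      have : (X (v i) : MvPolynomial (Fin n) K) * f₀ = X (v i) * f - X (v i) * (f - f₀) := by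
        ring
      rw [this]
      exact Ideal.sub_mem _ h1 h2
    have hne0 : g₀ * f₀ ≠ 0 := mul_ne_zero hg0 hf0ne
    obtain ⟨u, hu⟩ := support_nonempty.mpr hne0
    have husum := support_mul g₀ f₀ hu
    rw [Finset.mem_add] at husum
    obtain ⟨μ, hμ, c₀, hc₀, rfl⟩ := husum
    have hQμ : ∀ i, μ (v i) = 0 := by
      have := mem_support_iff.mp hμ
      rw [hg₀, coeff_strip] at this
      by_cases hq : Q μ
      · rw [hQ] at hq; exact hq
      · rw [if_neg hq] at this; exact absurd rfl this
    have h1 : ¬ MonPow a k c₀ := by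
      have := mem_support_iff.mp hc₀
      rw [hf₀def, coeff_strip] at this
      by_cases hmon : MonPow a k c₀
      · rw [if_neg (not_not.mpr hmon)] at this; exact absurd rfl this
      · exact hmon
    have h3 : MonPow a k (μ + c₀) := by
      rw [hI, mem_pow_iff] at hprod
      exact hprod _ hu
    have h2 : ∀ i, MonPow a k (Finsupp.single (v i) 1 + c₀) := by
      intro i
      have hXi := hXf₀ i
      rw [hI, mem_pow_iff] at hXi
      apply hXi
      rw [mem_support_iff, coeff_X_mul]
      exact mem_support_iff.mp hc₀
    exact lemA hm a hdisj v hv1 k hk c₀ μ h1 h2 h3 hQμ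
  rw [hg₀zero, sub_zero] at hgg₀
  exact hgg₀
end d

end Aux

/-- Corollary 5.6(a),(b): let `u_1,…,u_m` be nonconstant monomials with
pairwise disjoint supports and `I = (u_1,…,u_m)` the monomial complete intersection they
generate.  Then for every `k ≥ 1` the associated primes of `I^k` are exactly the primes
generated by one variable from the support of each `u_i`; in particular
`Ass(I^k) = Ass^∞(I)` for all `k ≥ 1`. -/
theorem stmt13 {K : Type} [Field K] {n m : ℕ} (hm : 1 ≤ m)
    (a : Fin m → (Fin n →₀ ℕ)) (hne : ∀ i, a i ≠ 0)
    (hdisj : Pairwise fun i j => Disjoint (a i).support (a j).support)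
    (I : Ideal (MvPolynomial (Fin n) K))
    (hI : I = Ideal.span (Set.range fun i => (monomial (a i) (1 : K)))) :
    (∀ k : ℕ, 1 ≤ k → assOf (I ^ k) =
      {P | ∃ v : Fin m → Fin n, (∀ i, v i ∈ (a i).support) ∧
        P = Ideal.span (Set.range fun i => (X (v i) : MvPolynomial (Fin n) K))}) ∧
    (∀ k l : ℕ, 1 ≤ k → 1 ≤ l → assOf (I ^ k) = assOf (I ^ l)) := by
  classical
  subst hI
  have main : ∀ k : ℕ, 1 ≤ k →
      assOf ((Ideal.span (Set.range fun i => (monomial (a i) (1 : K)))) ^ k) =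
      {P | ∃ v : Fin m → Fin n, (∀ i, v i ∈ (a i).support) ∧
        P = Ideal.span (Set.range fun i => (X (v i) : MvPolynomial (Fin n) K))} := by
    intro k hk
    ext p
    constructor
    · intro hp
      exact assoc_subset hm a hne hdisj k hk p hp
    · rintro ⟨v, hv1, rfl⟩
      exact assoc_of_choice hm a hdisj k hk v hv1
  exact ⟨main, fun k l hk hl => by rw [main k hk, main l hl]⟩
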